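/- Fix B > 0, an integer m ≥ 1, parameters p ∈ (0, 1] and c > 0, and two weight vectors α, α' in the simplex Δ_{m−1}. Define W_{p,c}^α = {z ∈ R^m_{≥0} : (Σ_i α_i z_i^p)^{1/p} ≥ c}. Then for every x ∈ W_{p,c}^α with ‖x‖_∞ ≤ B, the Euclidean distance from x to W_{p,c}^{α'} satisfies dist(x, W_{p,c}^{α'}) ≤ m^{3/2} B ‖α − α'‖_∞ / p. -/

import Mathlib

open scoped BigOperators

private lemma exp_half_le_two : Real.exp (1/2) ≤ 2 := by
  nlinarith [Real.exp_pos (1/2 : ℝ), Real.exp_one_lt_d9,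
    (by rw [← Real.exp_add]; norm_num :
      Real.exp (1/2 : ℝ) * Real.exp (1/2 : ℝ) = Real.exp 1)]

/-- Bernoulli-based increment bound: for `0 ≤ t`, `0 < a`, `1 ≤ q`,
`(t+a)^q - t^q ≤ q * a * (t+a)^(q-1)`. -/
private lemma incr_le {t a q : ℝ} (ht : 0 ≤ t) (ha : 0 < a) (hq : 1 ≤ q) :
    (t + a) ^ q - t ^ q ≤ q * a * (t + a) ^ (q - 1) := by
  have hT : 0 < t + a := by linarith
  have hs : (-1 : ℝ) ≤ -(a / (t + a)) := by
    rw [neg_le_neg_iff]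
    rw [div_le_one hT]
    linarith
  have hber := one_add_mul_self_le_rpow_one_add hs hq
  have h1 : (1 : ℝ) + -(a / (t + a)) = t / (t + a) := by
    field_simp
    ring
  rw [h1, Real.div_rpow ht hT.le] at hber
  -- hber : 1 + q * -(a / (t+a)) ≤ (t+a... : t^q/(t+a)^q
  have hTq : (0:ℝ) < (t + a) ^ q := Real.rpow_pos_of_pos hT q
  have h2 := mul_le_mul_of_nonneg_right hber hTq.le
  rw [div_mul_cancel₀ _ hTq.ne'] at h2
  -- h2 : (1 + q * -(a / (t + a))) * (t+a)^q ≤ t^q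
  have h3 : (t + a) ^ q = (t + a) ^ (q - 1) * (t + a) := by
    rw [← Real.rpow_add_one hT.ne' (q - 1)]
    ring_nf
  have h4 : (1 + q * -(a / (t + a))) * (t + a) ^ q
      = (t + a) ^ q - q * a * (t + a) ^ (q - 1) := by
    rw [h3]
    field_simp
    ring
  rw [h4] at h2
  linarith

set_option maxHeartbeats 2000000 in
theorem stmt_5 {m : ℕ} (hm : 1 ≤ m) (B : ℝ) (hB : 0 < B)
    (p : ℝ) (hp0 : 0 < p) (hp1 : p ≤ 1) (c : ℝ) (hc : 0 < c)
    (α α' : Fin m → ℝ)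
    (hα : ∀ i, 0 ≤ α i) (hαsum : ∑ i, α i = 1)
    (hα' : ∀ i, 0 ≤ α' i) (hα'sum : ∑ i, α' i = 1)
    (W : (Fin m → ℝ) → Set (EuclideanSpace ℝ (Fin m)))
    (hWdef : ∀ β, W β =
      {z | (∀ i, 0 ≤ z i) ∧ c ≤ (∑ i, β i * z i ^ p) ^ (1 / p)})
    (x : EuclideanSpace ℝ (Fin m)) (hx : x ∈ W α) (hxB : ∀ i, |x i| ≤ B) :
    Metric.infDist x (W α') ≤
      (m : ℝ) ^ ((3 : ℝ) / 2) * B *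
        (Finset.univ.sup' (Finset.univ_nonempty_iff.mpr
          (Fin.pos_iff_nonempty.mp hm)) fun i => |α i - α' i|) / p := by
  have hne : (Finset.univ : Finset (Fin m)).Nonempty :=
    Finset.univ_nonempty_iff.mpr (Fin.pos_iff_nonempty.mp hm)
  set ε := Finset.univ.sup' (Finset.univ_nonempty_iff.mpr
          (Fin.pos_iff_nonempty.mp hm)) (fun i => |α i - α' i|) with hεdef
  have hεi : ∀ i, |α i - α' i| ≤ ε := fun i =>
    Finset.le_sup' (fun i => |α i - α' i|) (Finset.mem_univ i)
  have i0 : Fin m := ⟨0, hm⟩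
  have hε0 : (0:ℝ) ≤ ε := (abs_nonneg _).trans (hεi i0)
  have hm1 : (1:ℝ) ≤ (m:ℝ) := by exact_mod_cast hm
  have hm0 : (0:ℝ) < (m:ℝ) := by linarith
  -- unpack x ∈ W α
  rw [hWdef] at hx
  obtain ⟨hx0, hxc⟩ := hx
  have hxiB : ∀ i, x i ≤ B := fun i => (abs_le.mp (hxB i)).2
  have hz0 : ∀ i, (0:ℝ) ≤ x i ^ p := fun i => Real.rpow_nonneg (hx0 i) p
  have hzB : ∀ i, x i ^ p ≤ B ^ p := fun i =>
    Real.rpow_le_rpow (hx0 i) (hxiB i) hp0.le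
  have hBp : (0:ℝ) < B ^ p := Real.rpow_pos_of_pos hB p
  have hs0 : (0:ℝ) ≤ ∑ i, α i * x i ^ p :=
    Finset.sum_nonneg fun i _ => mul_nonneg (hα i) (hz0 i)
  have hsB : ∑ i, α i * x i ^ p ≤ B ^ p := by
    calc ∑ i, α i * x i ^ p ≤ ∑ i, α i * B ^ p :=
          Finset.sum_le_sum fun i _ => mul_le_mul_of_nonneg_left (hzB i) (hα i)
      _ = B ^ p := by rw [← Finset.sum_mul, hαsum, one_mul]
  have hcs : c ^ p ≤ ∑ i, α i * x i ^ p := by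
    calc c ^ p ≤ ((∑ i, α i * x i ^ p) ^ (1/p)) ^ p :=
          Real.rpow_le_rpow hc.le hxc hp0.le
      _ = ∑ i, α i * x i ^ p := by
          rw [one_div, Real.rpow_inv_rpow hs0 hp0.ne']
  have hcB : c ≤ B := by
    by_contra h
    push_neg at h
    have := Real.rpow_lt_rpow hB.le h hp0
    linarith [hcs.trans hsB]
  have hRHS0 : (0:ℝ) ≤ (m : ℝ) ^ ((3 : ℝ) / 2) * B * ε / p :=
    div_nonneg (mul_nonneg (mul_nonneg
      (Real.rpow_nonneg (Nat.cast_nonneg m) _) hB.le) hε0) hp0.le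
  have hm32 : (m:ℝ) ^ ((3:ℝ)/2) = (m:ℝ) * Real.sqrt m := by
    rw [Real.sqrt_eq_rpow, ← Real.rpow_one_add' hm0.le (by norm_num)]
    norm_num
  have hsqm0 : (0:ℝ) ≤ Real.sqrt m := Real.sqrt_nonneg _
  -- generic distance bound through a witness with per-coordinate bound K
  have distb : ∀ (w : EuclideanSpace ℝ (Fin m)) (K : ℝ), 0 ≤ K →
      (∀ i, |x i - w i| ≤ K) → dist x w ≤ Real.sqrt m * K := by
    intro w K hK0 hK
    rw [EuclideanSpace.dist_eq]
    have h1 : ∑ i, dist (x i) (w i) ^ 2 ≤ (m:ℝ) * K ^ 2 := by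
      calc ∑ i, dist (x i) (w i) ^ 2 ≤ ∑ _i : Fin m, K ^ 2 :=
            Finset.sum_le_sum fun i _ => by
              have : dist (x i) (w i) ≤ K := by rw [Real.dist_eq]; exact hK i
              exact pow_le_pow_left₀ dist_nonneg this 2
        _ = (m:ℝ) * K ^ 2 := by
            rw [Finset.sum_const, Finset.card_univ, Fintype.card_fin,
              nsmul_eq_mul]
    calc Real.sqrt (∑ i, dist (x i) (w i) ^ 2) ≤ Real.sqrt ((m:ℝ) * K ^ 2) :=
          Real.sqrt_le_sqrt h1
      _ = Real.sqrt m * K := by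
          rw [Real.sqrt_mul (Nat.cast_nonneg m), Real.sqrt_sq hK0]
  by_cases hcase : p ≤ (m:ℝ) * ε
  · -- witness (B, ..., B)
    set w : EuclideanSpace ℝ (Fin m) := (WithLp.equiv 2 _).symm (fun _ => B)
      with hwdef
    have hw : ∀ i, w i = B := fun i => rfl
    have hmem : w ∈ W α' := by
      rw [hWdef]
      refine ⟨fun i => by rw [hw]; exact hB.le, ?_⟩
      have h1 : ∑ i, α' i * w i ^ p = B ^ p := by
        simp only [hw]
        rw [← Finset.sum_mul, hα'sum, one_mul]
      rw [h1, one_div, Real.rpow_rpow_inv hB.le hp0.ne']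
      exact hcB
    have h2 : dist x w ≤ Real.sqrt m * B := by
      refine distb w B hB.le fun i => ?_
      rw [hw]
      rw [abs_le]
      constructor <;> nlinarith [hx0 i, hxiB i]
    have h3 : Real.sqrt m * B ≤ (m : ℝ) ^ ((3 : ℝ) / 2) * B * ε / p := by
      rw [hm32, le_div_iff₀ hp0]
      nlinarith [mul_le_mul_of_nonneg_left hcase (mul_nonneg hsqm0 hB.le)]
    exact (Metric.infDist_le_dist_of_mem hmem).trans (h2.trans h3)
  · push_neg at hcase  -- m * ε < p
    set s' := ∑ i, α' i * x i ^ p with hs'def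
    have hs'0 : (0:ℝ) ≤ s' :=
      Finset.sum_nonneg fun i _ => mul_nonneg (hα' i) (hz0 i)
    set a := c ^ p - s' with hadef
    by_cases ha : a ≤ 0
    · -- x is already in W α'
      have hmem : x ∈ W α' := by
        rw [hWdef]
        refine ⟨hx0, ?_⟩
        have h1 : c ^ p ≤ s' := by linarith
        calc c = (c ^ p) ^ (1/p) := by
              rw [one_div, Real.rpow_rpow_inv hc.le hp0.ne']
          _ ≤ s' ^ (1/p) := Real.rpow_le_rpow (Real.rpow_nonneg hc.le p) h1
              (by positivity)
      rw [Metric.infDist_zero_of_mem hmem]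
      exact hRHS0
    · push_neg at ha  -- 0 < a
      clear_value s' a
      -- key bound : a ≤ m * ε * B^p / 2
      have hkey : a ≤ (m:ℝ) * ε * B ^ p / 2 := by
        have h1 : a ≤ (∑ i, α i * x i ^ p) - s' := by
          have := hcs; simp only [hadef]; linarith
        have h2 : (∑ i, α i * x i ^ p) - s'
            = ∑ i, (α i - α' i) * (x i ^ p - B ^ p) := by
          rw [hs'def]
          rw [← Finset.sum_sub_distrib]
          have h3 : ∑ i, (α i - α' i) * (B ^ p) = 0 := by
            rw [← Finset.sum_mul, Finset.sum_sub_distrib, hαsum, hα'sum]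
            ring
          calc ∑ i, (α i * x i ^ p - α' i * x i ^ p)
              = (∑ i, (α i - α' i) * (x i ^ p - B ^ p))
                + ∑ i, (α i - α' i) * (B ^ p) := by
                rw [← Finset.sum_add_distrib]
                exact Finset.sum_congr rfl fun i _ => by ring
            _ = ∑ i, (α i - α' i) * (x i ^ p - B ^ p) := by rw [h3, add_zero]
        have h4 : ∑ i, (α i - α' i) * (x i ^ p - B ^ p)
            ≤ ∑ i, (|α i - α' i| + (α' i - α i)) / 2 * B ^ p := by
          refine Finset.sum_le_sum fun i _ => ?_
          have hti : (0:ℝ) ≤ x i ^ p := hz0 i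
          have htBi : x i ^ p ≤ B ^ p := hzB i
          rcases le_or_gt (α i) (α' i) with h | h
          · rw [abs_of_nonpos (by linarith : α i - α' i ≤ 0)]
            have h9 : (α i - α' i) * (x i ^ p - B ^ p)
                = (α' i - α i) * (B ^ p - x i ^ p) := by ring
            rw [h9]
            have h10 : (α' i - α i) * (B ^ p - x i ^ p)
                ≤ (α' i - α i) * B ^ p :=
              mul_le_mul_of_nonneg_left (by linarith) (by linarith)
            calc (α' i - α i) * (B ^ p - x i ^ p) ≤ (α' i - α i) * B ^ p := h10
              _ = (-(α i - α' i) + (α' i - α i)) / 2 * B ^ p := by ring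
          · rw [abs_of_pos (by linarith : 0 < α i - α' i)]
            have h9 : (α i - α' i) * (x i ^ p - B ^ p) ≤ 0 :=
              mul_nonpos_of_nonneg_of_nonpos (by linarith) (by linarith)
            calc (α i - α' i) * (x i ^ p - B ^ p) ≤ 0 := h9
              _ = ((α i - α' i) + (α' i - α i)) / 2 * B ^ p := by ring
        have h5 : ∑ i, (|α i - α' i| + (α' i - α i)) / 2 * B ^ p
            ≤ (m:ℝ) * ε * B ^ p / 2 := by
          have hzero : ∑ i, (α' i - α i) = 0 := by
            rw [Finset.sum_sub_distrib, hα'sum, hαsum]; ring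
          have h6 : ∑ i, (|α i - α' i| + (α' i - α i)) / 2 * B ^ p
              = ((∑ i, |α i - α' i|) + (0:ℝ)) / 2 * B ^ p := by
            rw [← Finset.sum_mul, ← Finset.sum_div, Finset.sum_add_distrib,
              hzero]
          rw [h6]
          have h7 : ∑ i, |α i - α' i| ≤ (m:ℝ) * ε := by
            calc ∑ i, |α i - α' i| ≤ ∑ _i : Fin m, ε :=
                  Finset.sum_le_sum fun i _ => hεi i
              _ = (m:ℝ) * ε := by
                  rw [Finset.sum_const, Finset.card_univ, Fintype.card_fin,
                    nsmul_eq_mul]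
          nlinarith [hBp.le]
        linarith
      have hε0' : 0 < ε := by
        by_contra h
        push_neg at h
        have h1 : (m:ℝ) * ε ≤ 0 := mul_nonpos_of_nonneg_of_nonpos hm0.le h
        have h2 : (m:ℝ) * ε * B ^ p ≤ 0 :=
          mul_nonpos_of_nonpos_of_nonneg h1 hBp.le
        linarith
      -- witness w i = (x i ^ p + a) ^ (1/p)
      set w : EuclideanSpace ℝ (Fin m) :=
        (WithLp.equiv 2 _).symm (fun i => (x i ^ p + a) ^ (1/p)) with hwdef
      have hw : ∀ i, w i = (x i ^ p + a) ^ (1/p) := fun i => rfl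
      clear_value w
      have hta : ∀ i, (0:ℝ) < x i ^ p + a := fun i => by
        have := hz0 i; linarith
      have hmem : w ∈ W α' := by
        rw [hWdef]
        refine ⟨fun i => by
          rw [hw]; exact Real.rpow_nonneg (hta i).le _, ?_⟩
        have h1 : ∀ i, w i ^ p = x i ^ p + a := fun i => by
          rw [hw, one_div, Real.rpow_inv_rpow (hta i).le hp0.ne']
        have h2 : ∑ i, α' i * w i ^ p = c ^ p := by
          calc ∑ i, α' i * w i ^ p = ∑ i, (α' i * x i ^ p + α' i * a) := by
                exact Finset.sum_congr rfl fun i _ => by rw [h1 i]; ring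
            _ = s' + (∑ i, α' i) * a := by
                rw [Finset.sum_add_distrib, ← Finset.sum_mul, hs'def]
            _ = c ^ p := by rw [hα'sum, hadef]; ring
        rw [h2, one_div, Real.rpow_rpow_inv hc.le hp0.ne']
      -- per-coordinate bound
      have hq1 : (1:ℝ) ≤ 1/p := by rw [le_div_iff₀ hp0]; linarith
      have hKcoord : ∀ i, |x i - w i| ≤ 2 * a * B ^ (1 - p) / p := by
        intro i
        have hxi : x i = (x i ^ p) ^ (1/p) := by
          rw [one_div, Real.rpow_rpow_inv (hx0 i) hp0.ne']
        have hmono : x i ≤ w i := by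
          rw [hw]
          calc x i = (x i ^ p) ^ (1/p) := hxi
            _ ≤ (x i ^ p + a) ^ (1/p) :=
              Real.rpow_le_rpow (hz0 i) (by linarith) (by positivity)
        rw [abs_sub_comm]
        rw [abs_of_nonneg (sub_nonneg.mpr hmono)]
        -- w i - x i ≤ (1/p) * a * (x i ^ p + a) ^ (1/p - 1)
        have h1 : w i - x i ≤ (1/p) * a * (x i ^ p + a) ^ (1/p - 1) := by
          rw [hw]
          linarith [incr_le (hz0 i) ha hq1, hxi]
        -- (x i ^ p + a) ^ (1/p - 1) ≤ (B^p + a) ^ (1/p - 1)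
        have h2 : (x i ^ p + a) ^ (1/p - 1) ≤ (B ^ p + a) ^ (1/p - 1) :=
          Real.rpow_le_rpow (hta i).le (by linarith [hzB i]) (by linarith)
        -- (B^p + a) ^ (1/p - 1) ≤ 2 * B ^ (1-p)
        have h3 : (B ^ p + a) ^ (1/p - 1) ≤ 2 * B ^ (1 - p) := by
          have hu0 : (0:ℝ) < 1 + a / B ^ p := by positivity
          have hBa : B ^ p + a = B ^ p * (1 + a / B ^ p) := by
            field_simp
          rw [hBa, Real.mul_rpow hBp.le hu0.le]
          have h4 : (B ^ p) ^ (1/p - 1) = B ^ (1 - p) := by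
            rw [← Real.rpow_mul hB.le]
            congr 1
            field_simp
          have h5 : (1 + a / B ^ p) ^ (1/p - 1) ≤ 2 := by
            rw [Real.rpow_def_of_pos hu0]
            have hlog : Real.log (1 + a / B ^ p) ≤ a / B ^ p := by
              have := Real.log_le_sub_one_of_pos hu0
              linarith
            have hlog0 : (0:ℝ) ≤ Real.log (1 + a / B ^ p) :=
              Real.log_nonneg
                (le_add_of_nonneg_right (div_nonneg ha.le hBp.le))
            have huq : a / B ^ p * (1/p) ≤ 1/2 := by
              have h8 : a * 2 ≤ B ^ p * p := by
                have h8' := mul_le_mul_of_nonneg_right hcase.le hBp.le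
                linarith
              have h9 : a / B ^ p * (1/p) = a / (B ^ p * p) := by
                field_simp
              rw [h9, div_le_iff₀ (by positivity)]
              linarith
            have h6 : Real.log (1 + a / B ^ p) * (1/p - 1) ≤ 1/2 := by
              calc Real.log (1 + a / B ^ p) * (1/p - 1)
                  ≤ (a / B ^ p) * (1/p - 1) :=
                    mul_le_mul_of_nonneg_right hlog (by linarith)
                _ ≤ (a / B ^ p) * (1/p) := by
                    have : (0:ℝ) ≤ a / B ^ p := by positivity
                    nlinarith
                _ ≤ 1/2 := huq
            calc Real.exp (Real.log (1 + a / B ^ p) * (1/p - 1))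
                ≤ Real.exp (1/2) := Real.exp_le_exp.mpr h6
              _ ≤ 2 := exp_half_le_two
          calc (B ^ p) ^ (1/p - 1) * (1 + a / B ^ p) ^ (1/p - 1)
              ≤ (B ^ p) ^ (1/p - 1) * 2 :=
                mul_le_mul_of_nonneg_left h5 (Real.rpow_nonneg hBp.le _)
            _ = 2 * B ^ (1 - p) := by rw [h4]; ring
        have ha1p : (0:ℝ) ≤ (1/p) * a := by positivity
        calc w i - x i ≤ (1/p) * a * (x i ^ p + a) ^ (1/p - 1) := h1
          _ ≤ (1/p) * a * (2 * B ^ (1 - p)) := by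
              refine mul_le_mul_of_nonneg_left (h2.trans h3) ha1p
          _ = 2 * a * B ^ (1 - p) / p := by ring
      have hK0 : (0:ℝ) ≤ 2 * a * B ^ (1 - p) / p := by positivity
      have h2 := distb w (2 * a * B ^ (1 - p) / p) hK0 hKcoord
      -- final comparison
      have h3 : Real.sqrt m * (2 * a * B ^ (1 - p) / p)
          ≤ (m : ℝ) ^ ((3 : ℝ) / 2) * B * ε / p := by
        have hBB : B ^ p * B ^ (1 - p) = B := by
          rw [← Real.rpow_add hB]; norm_num
        have hB1p : (0:ℝ) < B ^ (1 - p) := Real.rpow_pos_of_pos hB _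
        have h10 : 2 * a * B ^ (1 - p) ≤ (m:ℝ) * ε * B := by
          have h11 := mul_le_mul_of_nonneg_right hkey hB1p.le
          calc 2 * a * B ^ (1 - p) = 2 * (a * B ^ (1 - p)) := by ring
            _ ≤ 2 * ((m:ℝ) * ε * B ^ p / 2 * B ^ (1 - p)) := by linarith
            _ = (m:ℝ) * ε * (B ^ p * B ^ (1 - p)) := by ring
            _ = (m:ℝ) * ε * B := by rw [hBB]
        have hgoal : Real.sqrt m * (2 * a * B ^ (1 - p) / p)
            = Real.sqrt m * (2 * a * B ^ (1 - p)) / p := by ring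
        rw [hm32, hgoal, div_le_div_iff₀ hp0 hp0]
        calc Real.sqrt m * (2 * a * B ^ (1 - p)) * p
            = (Real.sqrt m * p) * (2 * a * B ^ (1 - p)) := by ring
          _ ≤ (Real.sqrt m * p) * ((m:ℝ) * ε * B) :=
              mul_le_mul_of_nonneg_left h10 (by positivity)
          _ = (m:ℝ) * Real.sqrt m * B * ε * p := by ring
      exact (Metric.infDist_le_dist_of_mem hmem).trans (h2.trans h3)
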